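/- In the universal enveloping algebra of sl_2 over ℚ with standard basis e, h, f, the divided powers satisfy e^{(k)} f^{(m)} = Σ_{j=0}^{min(k,m)} f^{(m−j)} · (h − m − k + 2j choose j) · e^{(k−j)}, where x^{(r)} = x^r/r!. -/

import Mathlib

namespace Stmt18Aux

variable {A : Type*} [Ring A] [Algebra ℚ A]

def P (h : A) (a : ℤ) (j : ℕ) : A :=
  ((List.range j).map (fun r => h - (((a + (r : ℤ) : ℤ) : ℚ)) • (1 : A))).prod

lemma P_zero (h : A) (a : ℤ) : P h a 0 = 1 := rfl

lemma P_congr (h : A) {a b : ℤ} (j : ℕ) (hab : a = b) : P h a j = P h b j := by rw [hab]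

lemma P_succ (h : A) (a : ℤ) (j : ℕ) :
    P h a (j + 1) = P h a j * (h - (((a + (j : ℤ) : ℤ) : ℚ)) • (1 : A)) := by
  simp [P, List.range_succ]

lemma P_succ' (h : A) (a : ℤ) (j : ℕ) :
    P h a (j + 1) = (h - ((a : ℚ)) • (1 : A)) * P h (a + 1) j := by
  induction j generalizing a with
  | zero => simp [P_succ, P_zero]
  | succ n ih =>
    rw [P_succ, ih, mul_assoc, P_succ h (a+1) n]
    congr 3
    push_cast; ring

lemma P_pascal (h : A) (j : ℕ) (a : ℤ) :
    P h a (j + 1) = P h (a + 1) (j + 1) + ((j : ℚ) + 1) • P h (a + 1) j := by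
  induction j generalizing a with
  | zero =>
    simp only [P_succ, P_zero, one_mul, Nat.cast_zero, zero_add, one_smul]
    rw [show ((a + 0 : ℤ) : ℚ) = ((a + 1 + 0 : ℤ) : ℚ) - 1 by push_cast; ring]
    rw [sub_smul, one_smul]
    abel
  | succ n ih =>
    rw [P_succ h a (n+1), ih, P_succ h (a+1) (n+1), P_succ h (a+1) n]
    simp only [add_mul, sub_mul, mul_sub, smul_mul_assoc, mul_smul_comm, smul_sub, smul_add,
      mul_one, one_mul, smul_smul, mul_assoc]
    match_scalars <;> (push_cast; ring)

lemma P_pascal' (h : A) (j : ℕ) (a : ℤ) :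
    P h a j = P h (a + 1) j + (j : ℚ) • P h (a + 1) (j - 1) := by
  cases j with
  | zero => simp [P_zero]
  | succ n => rw [P_pascal]; push_cast; simp


variable (e h f : A)

section
variable (hhe : h * e - e * h = 2 • e)
include hhe

lemma e_lin (q : ℚ) : e * (h - q • (1 : A)) = (h - (q + 2) • (1 : A)) * e := by
  have h2 : (2 : ℚ) • e = 2 • e := by
    rw [← Nat.cast_smul_eq_nsmul ℚ 2 e]; norm_num
  have heh : e * h = h * e - (2 : ℚ) • e := by rw [h2, ← hhe]; abel
  rw [mul_sub, sub_mul, heh, mul_smul_comm, smul_mul_assoc, mul_one, one_mul, add_smul]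
  abel

lemma e_P (j : ℕ) (a : ℤ) : e * P h a j = P h (a + 2) j * e := by
  induction j generalizing a with
  | zero => simp [P_zero]
  | succ n ih =>
    rw [P_succ, ← mul_assoc, ih, mul_assoc, e_lin e h hhe, ← mul_assoc]
    congr 1
    rw [P_succ h (a+2) n,
      show ((((a + (n:ℤ)):ℤ):ℚ)+2) = (((a+2+(n:ℤ)):ℤ):ℚ) by push_cast; ring]

end

section
variable (hef : e * f - f * e = h) (hhf : h * f - f * h = -(2 • f))
include hef hhf

lemma e_fpow (n : ℕ) :
    e * f ^ n = f ^ n * e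
      + (n : ℚ) • (f ^ (n - 1) * (h - (((n : ℤ) - 1 : ℤ) : ℚ) • (1 : A))) := by
  have h2 : (2 : ℚ) • f = 2 • f := by
    rw [← Nat.cast_smul_eq_nsmul ℚ 2 f]; norm_num
  have hhf' : h * f = f * h - (2 : ℚ) • f := by
    rw [h2]
    have := hhf
    rw [sub_eq_iff_eq_add] at this
    rw [this]; abel
  have hef' : e * f = f * e + h := by rw [← hef]; abel
  induction n with
  | zero => simp
  | succ n ih =>
    rw [pow_succ, ← mul_assoc, ih, add_mul, smul_mul_assoc, mul_assoc (f ^ n) e f, hef',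
      Nat.add_sub_cancel, mul_add]
    rw [mul_assoc (f ^ (n-1)), sub_mul, smul_mul_assoc, one_mul, hhf']
    cases n with
    | zero =>
      simp only [pow_zero, Nat.cast_zero, zero_smul, pow_one, Nat.cast_one, one_smul,
        add_zero, one_mul]
      match_scalars <;> (push_cast; ring)
    | succ n =>
      rw [Nat.add_sub_cancel]
      simp only [mul_sub, mul_smul_comm, smul_sub, smul_smul, mul_add, add_mul,
        smul_mul_assoc, mul_one, ← mul_assoc, ← pow_succ]
      match_scalars <;> (push_cast; ring)

end

/-- Coefficient `C(k,j) * m(m-1)⋯(m-j+1)`. -/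
def c (k m j : ℕ) : ℕ := k.choose j * m.descFactorial j

lemma c_zero (k m : ℕ) : c k m 0 = 1 := by simp [c]

lemma c_top (k m : ℕ) : c k m (k+1) = 0 := by
  simp [c, Nat.choose_eq_zero_of_lt (Nat.lt_succ_self k)]

lemma c_pascal (k m j : ℕ) : c (k+1) m (j+1) = c k m (j+1) + (m - j) * c k m j := by
  simp only [c, Nat.choose_succ_succ, Nat.descFactorial_succ, add_mul]
  ring

lemma c_mul (k m j : ℕ) : (j+1) * c (k+1) m (j+1) = (k+1) * ((m - j) * c k m j) := by
  simp only [c, Nat.descFactorial_succ]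
  rw [show (j+1) * (Nat.choose (k+1) (j+1) * ((m-j) * m.descFactorial j))
      = (Nat.choose (k+1) (j+1) * (j+1)) * ((m-j) * m.descFactorial j) by ring,
    ← Nat.add_one_mul_choose_eq]
  ring

section
variable (hef : e * f - f * e = h) (hhe : h * e - e * h = 2 • e)
  (hhf : h * f - f * h = -(2 • f))
include hef hhe hhf

/-- The key per-term step: multiplying one term of the sum by `e` on the left. -/
lemma step (k m j : ℕ) (hj : j ≤ k) :
    e * (f ^ (m-j) * P h ((m:ℤ) + k - 2*j) j * e ^ (k-j))
      = f ^ (m-j) * P h ((m:ℤ) + k - 2*j + 2) j * e ^ (k+1-j)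
      + ((m-j : ℕ) : ℚ) • (f ^ (m-(j+1)) * P h ((m:ℤ) + k - 2*j - 1) (j+1) * e ^ (k-j))
      + (((k-j) * (m-j) : ℕ) : ℚ) •
          (f ^ (m-(j+1)) * P h ((m:ℤ) + k - 2*j) j * e ^ (k-j)) := by
  have hk1 : k + 1 - j = (k - j) + 1 := by omega
  rw [hk1, ← mul_assoc, ← mul_assoc, e_fpow e h f hef hhf (m-j), add_mul, add_mul,
    smul_mul_assoc, smul_mul_assoc, mul_assoc (f ^ (m-j)) e _,
    e_P e h hhe j ((m:ℤ) + k - 2*j), ← mul_assoc, mul_assoc _ _ (e ^ (k-j)),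
    ← pow_succ']
  by_cases hm : j < m
  · have hsub : m - (j+1) = m - j - 1 := by omega
    have hcast : ((((m-j : ℕ) : ℤ) - 1 : ℤ) : ℚ)
        = (((m:ℤ) + k - 2*j - 1 : ℤ) : ℚ) - ((k - j : ℕ) : ℚ) := by
      push_cast [hm.le, hj]; ring
    rw [hsub, hcast, show (h - ((((m:ℤ) + k - 2*j - 1 : ℤ) : ℚ) - ((k - j : ℕ) : ℚ)) • (1:A))
        = (h - (((m:ℤ) + k - 2*j - 1 : ℤ) : ℚ) • 1) + ((k - j : ℕ) : ℚ) • 1 by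
      rw [sub_smul]; abel]
    rw [mul_add, add_mul, add_mul,
      mul_assoc (f ^ (m - j - 1)) (h - (((m:ℤ) + k - 2*j - 1 : ℤ) : ℚ) • 1)
        (P h ((m:ℤ) + k - 2*j) j),
      show (h - (((m:ℤ) + k - 2*j - 1 : ℤ) : ℚ) • 1) * P h ((m:ℤ) + k - 2*j) j
          = P h ((m:ℤ) + k - 2*j - 1) (j+1) by
        rw [P_succ' h ((m:ℤ) + k - 2*j - 1) j, sub_add_cancel]]
    simp only [mul_smul_comm, smul_mul_assoc, mul_one, smul_add, smul_smul, mul_assoc]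
    match_scalars <;> (push_cast; ring)
  · have h0 : m - j = 0 := by omega
    simp [h0]
/-- Kostant's commutation formula, denominator-free form. -/
lemma key (m k : ℕ) :
    e ^ k * f ^ m = ∑ j ∈ Finset.range (k+1),
      ((c k m j : ℕ) : ℚ) • (f ^ (m-j) * P h ((m:ℤ) + k - 2*j) j * e ^ (k-j)) := by
  induction k with
  | zero => simp [c, P_zero]
  | succ k ih =>
    have expand : ∀ j ∈ Finset.range (k+1),
        e * (((c k m j : ℕ) : ℚ) • (f ^ (m-j) * P h ((m:ℤ) + k - 2*j) j * e ^ (k-j)))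
        = ((c k m j : ℕ) : ℚ) •
            (f ^ (m-j) * P h ((m:ℤ) + (k+1:ℕ) - 2*j + 1) j * e ^ (k+1-j))
          + (((m-j) * c k m j : ℕ) : ℚ) •
            (f ^ (m-(j+1)) * P h ((m:ℤ) + (k+1:ℕ) - 2*((j+1:ℕ):ℤ) + 1) (j+1) * e ^ (k-j))
          + (((k+1) * ((m-j) * c k m j) : ℕ) : ℚ) •
            (f ^ (m-(j+1)) * P h ((m:ℤ) + (k+1:ℕ) - 2*((j+1:ℕ):ℤ) + 1) j * e ^ (k-j)) := by
      intro j hj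
      rw [Finset.mem_range, Nat.lt_succ_iff] at hj
      rw [mul_smul_comm, step e h f hef hhe hhf k m j hj,
        P_pascal' h (j+1) ((m:ℤ) + ↑k - 2*↑j - 1)]
      simp only [Nat.add_sub_cancel]
      rw [P_congr h j
          (show (m:ℤ) + ↑k - 2*↑j + 2 = (m:ℤ) + (k+1:ℕ) - 2*↑j + 1 by push_cast; ring),
        P_congr h (j+1)
          (show (m:ℤ) + ↑k - 2*↑j - 1 + 1
              = (m:ℤ) + (k+1:ℕ) - 2*((j+1:ℕ):ℤ) + 1 by push_cast; ring),
        P_congr h j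
          (show (m:ℤ) + ↑k - 2*↑j
              = (m:ℤ) + (k+1:ℕ) - 2*((j+1:ℕ):ℤ) + 1 by push_cast; ring),
        P_congr h j
          (show (m:ℤ) + ↑k - 2*↑j - 1 + 1
              = (m:ℤ) + (k+1:ℕ) - 2*((j+1:ℕ):ℤ) + 1 by push_cast; ring)]
      simp only [mul_add, add_mul, smul_mul_assoc, mul_smul_comm, smul_add, smul_smul, mul_assoc]
      match_scalars <;> (push_cast [hj]; ring)
    have hL : e ^ (k+1) * f ^ m
        = (∑ j ∈ Finset.range (k+1), ((c k m j : ℕ) : ℚ) •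
            (f ^ (m-j) * P h ((m:ℤ) + (k+1:ℕ) - 2*j + 1) j * e ^ (k+1-j)))
        + (∑ j ∈ Finset.range (k+1), (((m-j) * c k m j : ℕ) : ℚ) •
            (f ^ (m-(j+1)) * P h ((m:ℤ) + (k+1:ℕ) - 2*((j+1:ℕ):ℤ) + 1) (j+1) * e ^ (k-j)))
        + (∑ j ∈ Finset.range (k+1), (((k+1) * ((m-j) * c k m j) : ℕ) : ℚ) •
            (f ^ (m-(j+1)) * P h ((m:ℤ) + (k+1:ℕ) - 2*((j+1:ℕ):ℤ) + 1) j * e ^ (k-j))) := by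
      rw [pow_succ', mul_assoc, ih, Finset.mul_sum, ← Finset.sum_add_distrib,
        ← Finset.sum_add_distrib]
      exact Finset.sum_congr rfl expand
    have hR : (∑ j ∈ Finset.range (k+1+1), ((c (k+1) m j : ℕ) : ℚ) •
            (f ^ (m-j) * P h ((m:ℤ) + (k+1:ℕ) - 2*j) j * e ^ (k+1-j)))
        = (∑ j ∈ Finset.range (k+1+1), ((c (k+1) m j : ℕ) : ℚ) •
            (f ^ (m-j) * P h ((m:ℤ) + (k+1:ℕ) - 2*j + 1) j * e ^ (k+1-j)))
        + (∑ j ∈ Finset.range (k+1+1), ((j * c (k+1) m j : ℕ) : ℚ) •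
            (f ^ (m-j) * P h ((m:ℤ) + (k+1:ℕ) - 2*j + 1) (j-1) * e ^ (k+1-j))) := by
      rw [← Finset.sum_add_distrib]
      refine Finset.sum_congr rfl fun i _ => ?_
      rw [P_pascal' h i ((m:ℤ) + (k+1:ℕ) - 2*i)]
      simp only [mul_add, add_mul, smul_mul_assoc, mul_smul_comm, smul_add, smul_smul,
        mul_assoc]
      match_scalars <;> (push_cast; ring)
    -- peel the top (zero) term and shift the first sum of hL
    have hS1 : (∑ j ∈ Finset.range (k+1), ((c k m j : ℕ) : ℚ) •
            (f ^ (m-j) * P h ((m:ℤ) + (k+1:ℕ) - 2*j + 1) j * e ^ (k+1-j)))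
        = (∑ j ∈ Finset.range (k+1), ((c k m (j+1) : ℕ) : ℚ) •
            (f ^ (m-(j+1)) * P h ((m:ℤ) + (k+1:ℕ) - 2*((j+1:ℕ):ℤ) + 1) (j+1) * e ^ (k+1-(j+1))))
          + ((c k m 0 : ℕ) : ℚ) •
            (f ^ (m-0) * P h ((m:ℤ) + (k+1:ℕ) - 2*((0:ℕ):ℤ) + 1) 0 * e ^ (k+1-0)) := by
      rw [show (∑ j ∈ Finset.range (k+1), ((c k m j : ℕ) : ℚ) •
            (f ^ (m-j) * P h ((m:ℤ) + (k+1:ℕ) - 2*j + 1) j * e ^ (k+1-j)))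
          = ∑ j ∈ Finset.range (k+1+1), ((c k m j : ℕ) : ℚ) •
            (f ^ (m-j) * P h ((m:ℤ) + (k+1:ℕ) - 2*j + 1) j * e ^ (k+1-j)) by
        conv_rhs => rw [Finset.sum_range_succ]
        rw [c_top]; simp]
      exact Finset.sum_range_succ' _ (k+1)
    have hS2 : (∑ j ∈ Finset.range (k+1+1), ((c (k+1) m j : ℕ) : ℚ) •
            (f ^ (m-j) * P h ((m:ℤ) + (k+1:ℕ) - 2*j + 1) j * e ^ (k+1-j)))
        = (∑ j ∈ Finset.range (k+1), ((c (k+1) m (j+1) : ℕ) : ℚ) •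
            (f ^ (m-(j+1)) * P h ((m:ℤ) + (k+1:ℕ) - 2*((j+1:ℕ):ℤ) + 1) (j+1) * e ^ (k+1-(j+1))))
          + ((c (k+1) m 0 : ℕ) : ℚ) •
            (f ^ (m-0) * P h ((m:ℤ) + (k+1:ℕ) - 2*((0:ℕ):ℤ) + 1) 0 * e ^ (k+1-0)) :=
      Finset.sum_range_succ' _ (k+1)
    have hS3 : (∑ j ∈ Finset.range (k+1+1), ((j * c (k+1) m j : ℕ) : ℚ) •
            (f ^ (m-j) * P h ((m:ℤ) + (k+1:ℕ) - 2*j + 1) (j-1) * e ^ (k+1-j)))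
        = (∑ j ∈ Finset.range (k+1), (((j+1) * c (k+1) m (j+1) : ℕ) : ℚ) •
            (f ^ (m-(j+1)) * P h ((m:ℤ) + (k+1:ℕ) - 2*((j+1:ℕ):ℤ) + 1) ((j+1)-1) * e ^ (k+1-(j+1))))
          + ((0 * c (k+1) m 0 : ℕ) : ℚ) •
            (f ^ (m-0) * P h ((m:ℤ) + (k+1:ℕ) - 2*((0:ℕ):ℤ) + 1) (0-1) * e ^ (k+1-0)) :=
      Finset.sum_range_succ' _ (k+1)
    rw [hL, hR, hS1, hS2, hS3]
    simp only [Nat.succ_sub_succ, Nat.add_sub_cancel, Nat.sub_zero, c_zero, Nat.cast_one,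
      one_smul, zero_mul, Nat.cast_zero, zero_smul, add_zero]
    have hAB : (∑ j ∈ Finset.range (k+1), ((c k m (j+1) : ℕ) : ℚ) •
            (f ^ (m-(j+1)) * P h ((m:ℤ) + (k+1:ℕ) - 2*((j+1:ℕ):ℤ) + 1) (j+1) * e ^ (k-j)))
        + (∑ j ∈ Finset.range (k+1), (((m-j) * c k m j : ℕ) : ℚ) •
            (f ^ (m-(j+1)) * P h ((m:ℤ) + (k+1:ℕ) - 2*((j+1:ℕ):ℤ) + 1) (j+1) * e ^ (k-j)))
        = ∑ j ∈ Finset.range (k+1), ((c (k+1) m (j+1) : ℕ) : ℚ) •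
            (f ^ (m-(j+1)) * P h ((m:ℤ) + (k+1:ℕ) - 2*((j+1:ℕ):ℤ) + 1) (j+1) * e ^ (k-j)) := by
      rw [← Finset.sum_add_distrib]
      refine Finset.sum_congr rfl fun j _ => ?_
      rw [← add_smul]
      congr 1
      exact_mod_cast (c_pascal k m j).symm
    have hC : (∑ j ∈ Finset.range (k+1), (((k+1) * ((m-j) * c k m j) : ℕ) : ℚ) •
            (f ^ (m-(j+1)) * P h ((m:ℤ) + (k+1:ℕ) - 2*((j+1:ℕ):ℤ) + 1) j * e ^ (k-j)))
        = ∑ j ∈ Finset.range (k+1), (((j+1) * c (k+1) m (j+1) : ℕ) : ℚ) •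
            (f ^ (m-(j+1)) * P h ((m:ℤ) + (k+1:ℕ) - 2*((j+1:ℕ):ℤ) + 1) j * e ^ (k-j)) := by
      refine Finset.sum_congr rfl fun j _ => ?_
      congr 1
      exact_mod_cast (c_mul k m j).symm
    rw [← hAB, ← hC]
    abel

end

end Stmt18Aux



/-- The divided power commutation formula in the universal enveloping algebra of `sl₂`
over ℚ (stated, via the universal property, in any associative ℚ-algebra containing
elements `e, h, f` satisfying the `sl₂` relations):
`e^{(k)} f^{(m)} = ∑_{j=0}^{min(k,m)} f^{(m−j)} (h − m − k + 2j choose j) e^{(k−j)}`,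
where `x^{(r)} = x^r/r!` and
`(h − a choose j) = (h−a)(h−a−1)⋯(h−a−j+1)/j!`. -/
theorem stmt18 (A : Type*) [Ring A] [Algebra ℚ A] (e h f : A)
    (hef : e * f - f * e = h)
    (hhe : h * e - e * h = 2 • e)
    (hhf : h * f - f * h = -(2 • f))
    (k m : ℕ) :
    ((k.factorial : ℚ)⁻¹ • e ^ k) * ((m.factorial : ℚ)⁻¹ • f ^ m)
      = ∑ j ∈ Finset.range (min k m + 1),
          ((m - j).factorial : ℚ)⁻¹ • f ^ (m - j)
          * ((j.factorial : ℚ)⁻¹ •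
              ((List.range j).map
                (fun r => h - ((((m : ℤ) + k - 2 * j + r : ℤ) : ℚ)) • (1 : A))).prod)
          * (((k - j).factorial : ℚ)⁻¹ • e ^ (k - j)) := by
  have hkey := Stmt18Aux.key e h f hef hhe hhf m k
  have hsub : Finset.range (min k m + 1) ⊆ Finset.range (k+1) :=
    Finset.range_subset_range.mpr (by omega)
  calc ((k.factorial : ℚ)⁻¹ • e ^ k) * ((m.factorial : ℚ)⁻¹ • f ^ m)
      = ((k.factorial : ℚ)⁻¹ * (m.factorial : ℚ)⁻¹) • (e ^ k * f ^ m) := by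
        rw [smul_mul_assoc, mul_smul_comm, smul_smul]
    _ = ∑ j ∈ Finset.range (k+1), ((k.factorial : ℚ)⁻¹ * (m.factorial : ℚ)⁻¹) •
          (((Stmt18Aux.c k m j : ℕ) : ℚ) •
            (f ^ (m-j) * Stmt18Aux.P h ((m:ℤ) + k - 2*j) j * e ^ (k-j))) := by
        rw [hkey, Finset.smul_sum]
    _ = ∑ j ∈ Finset.range (min k m + 1), ((k.factorial : ℚ)⁻¹ * (m.factorial : ℚ)⁻¹) •
          (((Stmt18Aux.c k m j : ℕ) : ℚ) •
            (f ^ (m-j) * Stmt18Aux.P h ((m:ℤ) + k - 2*j) j * e ^ (k-j))) := by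
        refine (Finset.sum_subset hsub fun x hx1 hx2 => ?_).symm
        simp only [Finset.mem_range] at hx1 hx2
        have hxm : m < x := by omega
        have hc0 : Stmt18Aux.c k m x = 0 := by
          simp [Stmt18Aux.c, Nat.descFactorial_eq_zero_iff_lt.mpr hxm]
        simp [hc0]
    _ = _ := by
        refine Finset.sum_congr rfl fun j hj => ?_
        rw [Finset.mem_range] at hj
        have hjk : j ≤ k := by omega
        have hjm : j ≤ m := by omega
        have hnat : (Nat.choose k j * Nat.descFactorial m j)
            * ((m-j).factorial * (j.factorial * (k-j).factorial))
            = k.factorial * m.factorial := by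
          calc (Nat.choose k j * Nat.descFactorial m j)
              * ((m-j).factorial * (j.factorial * (k-j).factorial))
              = (Nat.choose k j * j.factorial * (k-j).factorial)
                * ((m-j).factorial * Nat.descFactorial m j) := by ring
            _ = k.factorial * m.factorial := by
                rw [Nat.choose_mul_factorial_mul_factorial hjk,
                  Nat.factorial_mul_descFactorial hjm]
        have hq : ((Nat.choose k j : ℚ) * (Nat.descFactorial m j : ℚ))
            * (((m-j).factorial : ℚ) * ((j.factorial : ℚ) * ((k-j).factorial : ℚ)))
            = (k.factorial : ℚ) * (m.factorial : ℚ) := by exact_mod_cast hnat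
        have f1 : ((m-j).factorial : ℚ) ≠ 0 := Nat.cast_ne_zero.mpr (Nat.factorial_ne_zero _)
        have f2 : ((j.factorial : ℚ)) ≠ 0 := Nat.cast_ne_zero.mpr (Nat.factorial_ne_zero _)
        have f3 : (((k-j).factorial : ℚ)) ≠ 0 := Nat.cast_ne_zero.mpr (Nat.factorial_ne_zero _)
        have f4 : ((k.factorial : ℚ)) ≠ 0 := Nat.cast_ne_zero.mpr (Nat.factorial_ne_zero _)
        have f5 : ((m.factorial : ℚ)) ≠ 0 := Nat.cast_ne_zero.mpr (Nat.factorial_ne_zero _)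
        simp only [Stmt18Aux.P, Stmt18Aux.c]
        simp only [smul_mul_assoc, mul_smul_comm, smul_smul, mul_assoc]
        match_scalars
        push_cast
        field_simp
        linear_combination hq
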